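/- Fix a unit vector y in ℝ³ and λ > 0. The map F sending a pair (z, μ), where z is a unit vector distinct from y and μ > 0, to the pair (c, r) ∈ {y}^⊥ × (0,∞) with c = (2λ/‖y-z‖²)·π_y(z) and r = 2√(λμ)/‖y-z‖, is injective. -/

import Mathlib

open RealInnerProductSpace

theorem F_injective
    (y : EuclideanSpace ℝ (Fin 3)) (hy : ‖y‖ = 1) (lam : ℝ) (hlam : 0 < lam)
    (z₁ z₂ : EuclideanSpace ℝ (Fin 3)) (hz₁ : ‖z₁‖ = 1) (hz₂ : ‖z₂‖ = 1)
    (hz₁y : z₁ ≠ y) (hz₂y : z₂ ≠ y)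
    (mu₁ mu₂ : ℝ) (hmu₁ : 0 < mu₁) (hmu₂ : 0 < mu₂)
    (hc : (2 * lam / ‖y - z₁‖ ^ 2) •
            ((Submodule.orthogonalProjectionOnto (ℝ ∙ y)ᗮ z₁ : EuclideanSpace ℝ (Fin 3))) =
          (2 * lam / ‖y - z₂‖ ^ 2) •
            ((Submodule.orthogonalProjectionOnto (ℝ ∙ y)ᗮ z₂ : EuclideanSpace ℝ (Fin 3))))
    (hr : 2 * Real.sqrt (lam * mu₁) / ‖y - z₁‖ = 2 * Real.sqrt (lam * mu₂) / ‖y - z₂‖) :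
    z₁ = z₂ ∧ mu₁ = mu₂ := by
  have hproj : ∀ z : EuclideanSpace ℝ (Fin 3),
      (Submodule.orthogonalProjectionOnto (ℝ ∙ y)ᗮ z : EuclideanSpace ℝ (Fin 3)) = z - ⟪y, z⟫ • y := by
    intro z
    have h := Submodule.starProjection_add_starProjection_orthogonal (K := ℝ ∙ y) z
    rw [Submodule.starProjection_unit_singleton ℝ hy z] at h
    exact eq_sub_of_add_eq' h
  set t₁ : ℝ := ⟪y, z₁⟫ with ht₁
  set t₂ : ℝ := ⟪y, z₂⟫ with ht₂
  have ha₁ : ‖y - z₁‖ ^ 2 = 2 - 2 * t₁ := by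
    rw [norm_sub_sq_real, hy, hz₁]; ring
  have ha₂ : ‖y - z₂‖ ^ 2 = 2 - 2 * t₂ := by
    rw [norm_sub_sq_real, hy, hz₂]; ring
  have ha₁pos : 0 < ‖y - z₁‖ := by
    rw [norm_pos_iff, sub_ne_zero]; exact fun h => hz₁y h.symm
  have ha₂pos : 0 < ‖y - z₂‖ := by
    rw [norm_pos_iff, sub_ne_zero]; exact fun h => hz₂y h.symm
  have ht₁lt : t₁ < 1 := by nlinarith [ha₁, pow_pos ha₁pos 2]
  have ht₂lt : t₂ < 1 := by nlinarith [ha₂, pow_pos ha₂pos 2]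
  have hyz₁ : ⟪z₁, y⟫ = t₁ := (real_inner_comm z₁ y).symm
  have hyz₂ : ⟪z₂, y⟫ = t₂ := (real_inner_comm z₂ y).symm
  have hn₁ : ‖(Submodule.orthogonalProjectionOnto (ℝ ∙ y)ᗮ z₁ : EuclideanSpace ℝ (Fin 3))‖ ^ 2
      = 1 - t₁ ^ 2 := by
    rw [hproj z₁, norm_sub_sq_real, real_inner_smul_right, hyz₁, hz₁, norm_smul, hy,
      Real.norm_eq_abs, mul_one, sq_abs]
    ring
  have hn₂ : ‖(Submodule.orthogonalProjectionOnto (ℝ ∙ y)ᗮ z₂ : EuclideanSpace ℝ (Fin 3))‖ ^ 2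
      = 1 - t₂ ^ 2 := by
    rw [hproj z₂, norm_sub_sq_real, real_inner_smul_right, hyz₂, hz₂, norm_smul, hy,
      Real.norm_eq_abs, mul_one, sq_abs]
    ring
  have hnormc : (2 * lam / ‖y - z₁‖ ^ 2) ^ 2 * (1 - t₁ ^ 2)
      = (2 * lam / ‖y - z₂‖ ^ 2) ^ 2 * (1 - t₂ ^ 2) := by
    have := congrArg (fun v : EuclideanSpace ℝ (Fin 3) => ‖v‖ ^ 2) hc
    simp only [norm_smul, mul_pow, Real.norm_eq_abs, sq_abs] at this
    rw [hn₁, hn₂] at this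
    exact this
  rw [ha₁, ha₂, div_pow, div_pow] at hnormc
  have h2t₁ : (0:ℝ) < 2 - 2 * t₁ := by linarith
  have h2t₂ : (0:ℝ) < 2 - 2 * t₂ := by linarith
  have hteq : t₁ = t₂ := by
    field_simp at hnormc
    have key : lam ^ 2 * ((1 - t₁) * (1 - t₂)) * (t₁ - t₂) = 0 := by
      rw [div_eq_div_iff (pow_ne_zero 2 (by linarith : (1:ℝ) - t₁ ≠ 0))
        (pow_ne_zero 2 (by linarith : (1:ℝ) - t₂ ≠ 0))] at hnormc
      linear_combination (lam ^ 2 / 2) * hnormc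
    have hpos : 0 < lam ^ 2 * ((1 - t₁) * (1 - t₂)) := by
      have := mul_pos (by linarith : (0:ℝ) < 1 - t₁) (by linarith : (0:ℝ) < 1 - t₂)
      positivity
    have := (mul_eq_zero.mp key).resolve_left hpos.ne'
    linarith
  have haeq : ‖y - z₁‖ = ‖y - z₂‖ := by
    have hsq : ‖y - z₁‖ ^ 2 = ‖y - z₂‖ ^ 2 := by rw [ha₁, ha₂, hteq]
    exact (sq_eq_sq₀ ha₁pos.le ha₂pos.le).mp hsq
  have hz : z₁ = z₂ := by
    have hcoef : (2 * lam / ‖y - z₁‖ ^ 2) ≠ 0 := by positivity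
    rw [haeq] at hc
    have hpeq := smul_right_injective (EuclideanSpace ℝ (Fin 3))
      (by rw [← haeq]; exact hcoef) hc
    have h1 := hproj z₁
    have h2 := hproj z₂
    rw [hpeq] at h1
    have h3 := h1.symm.trans h2
    rw [← ht₁, ← ht₂, hteq] at h3
    exact sub_left_injective h3
  refine ⟨hz, ?_⟩
  rw [haeq] at hr
  field_simp at hr
  have hmu := (Real.sqrt_inj (by positivity) (by positivity)).mp hr
  exact mul_left_cancel₀ hlam.ne' hmu
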